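/- Let C = C_{b,D} have increasing enumeration (k_n), δ = |D|, and fix h ≥ 1 and integers k, s ≥ 0. Define Δ = {n ≥ 0 : k_{n+h} − k_n = k and s_b(k_{n+h}) − s_b(k_n) = s}. If j ∈ Δ and i is such that j + h < δ^i, then j + m δ^i ∈ Δ for every m ≥ 0. -/

import Mathlib

namespace CantorAux

/-- The candidate enumeration: map base-`δ` digits of `n` through `w` and read in base `b`. -/
def cf (b δ : ℕ) (w : ℕ → ℕ) (n : ℕ) : ℕ :=
  Nat.ofDigits b ((Nat.digits δ n).map w)

variable {b δ : ℕ} {w : ℕ → ℕ}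

lemma cf_zero : cf b δ w 0 = 0 := by simp [cf]

lemma cf_rec (hδ : 2 ≤ δ) (hw0 : w 0 = 0) (n : ℕ) :
    cf b δ w n = w (n % δ) + b * cf b δ w (n / δ) := by
  rcases Nat.eq_zero_or_pos n with rfl | hn
  · simp [cf, hw0]
  · rw [cf, Nat.digits_def' hδ hn]
    simp [cf, Nat.ofDigits_cons]

lemma cf_lt_pow (hδ : 2 ≤ δ) (hw0 : w 0 = 0) (hwb : ∀ r, w r < b) :
    ∀ i n, n < δ ^ i → cf b δ w n < b ^ i := by
  intro i
  induction i with
  | zero =>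
    intro n hn
    simp only [pow_zero, Nat.lt_one_iff] at hn
    subst hn
    simpa [cf_zero] using Nat.pos_pow_of_pos 0 ((hwb 0).trans_le' (Nat.zero_le _))
  | succ i ih =>
    intro n hn
    have hb : 0 < b := (hwb 0).trans_le' (Nat.zero_le _)
    rw [cf_rec hδ hw0]
    have hq : n / δ < δ ^ i := by
      rw [Nat.div_lt_iff_lt_mul (by omega)]
      calc n < δ ^ (i + 1) := hn
        _ = δ ^ i * δ := pow_succ δ i
    have := ih _ hq
    have hwr := hwb (n % δ)
    calc w (n % δ) + b * cf b δ w (n / δ) < b + b * cf b δ w (n / δ) := by omega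
      _ = b * (cf b δ w (n / δ) + 1) := by ring
      _ ≤ b * b ^ i := by
          exact Nat.mul_le_mul_left b (by omega)
      _ = b ^ (i + 1) := by ring

lemma cf_strictMono (hδ : 2 ≤ δ) (hw0 : w 0 = 0) (hwb : ∀ r, w r < b)
    (hwm : ∀ r r', r < r' → r' < δ → w r < w r') :
    StrictMono (cf b δ w) := by
  have key : ∀ n', ∀ n, n < n' → cf b δ w n < cf b δ w n' := by
    intro n'
    induction n' using Nat.strong_induction_on with
    | _ n' ih =>
      intro n hn
      have hn' : 0 < n' := by omega
      rw [cf_rec hδ hw0 (n := n')]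
      have hpos : 0 < w (n' % δ) + b * cf b δ w (n' / δ) := by
        rcases Nat.eq_zero_or_pos (n' % δ) with h1 | h1
        · have hdm := Nat.div_add_mod n' δ
          have hq : 0 < n' / δ := by
            rcases Nat.eq_zero_or_pos (n' / δ) with h2 | h2
            · simp [h1, h2] at hdm; omega
            · exact h2
          have h3 := ih (n' / δ) (Nat.div_lt_self hn' (by omega)) 0 hq
          rw [cf_zero] at h3
          have hb : 0 < b := (hwb 0).trans_le' (Nat.zero_le _)
          nlinarith
        · have h2 := hwm 0 (n' % δ) h1 (Nat.mod_lt _ (by omega))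
          rw [hw0] at h2
          omega
      rcases Nat.eq_zero_or_pos n with rfl | hnpos
      · rw [cf_zero]; exact hpos
      rw [cf_rec hδ hw0 (n := n)]
      have hqle : n / δ ≤ n' / δ := Nat.div_le_div_right (le_of_lt hn)
      rcases lt_or_eq_of_le hqle with hq | hq
      · have hcf : cf b δ w (n / δ) < cf b δ w (n' / δ) :=
          ih (n' / δ) (Nat.div_lt_self hn' (by omega)) _ hq
        have hwr := hwb (n % δ)
        calc w (n % δ) + b * cf b δ w (n / δ)
            < b + b * cf b δ w (n / δ) := by omega
          _ = b * (cf b δ w (n / δ) + 1) := by ring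
          _ ≤ b * cf b δ w (n' / δ) := Nat.mul_le_mul_left b (by omega)
          _ ≤ w (n' % δ) + b * cf b δ w (n' / δ) := by omega
      · have hr : n % δ < n' % δ := by
          have e1 := Nat.div_add_mod n δ
          have e2 := Nat.div_add_mod n' δ
          have e3 : δ * (n / δ) = δ * (n' / δ) := by rw [hq]
          rcases lt_trichotomy (n % δ) (n' % δ) with h | h | h
          · exact h
          · omega
          · omega
        have hw1 := hwm _ _ hr (Nat.mod_lt _ (by omega))
        rw [hq]
        omega
  exact fun a c hac => key c a hac

lemma cf_digits_mem {D : Finset ℕ} (hδ : 2 ≤ δ) (hb : 2 ≤ b) (hw0 : w 0 = 0)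
    (hwb : ∀ r, w r < b) (hwD : ∀ r < δ, w r ∈ D) :
    ∀ n, ∀ e ∈ Nat.digits b (cf b δ w n), e ∈ D := by
  intro n
  induction n using Nat.strong_induction_on with
  | _ n ih =>
    intro e he
    rcases Nat.eq_zero_or_pos (cf b δ w n) with h1 | h1
    · rw [h1] at he; simp at he
    rcases Nat.eq_zero_or_pos n with rfl | hn
    · rw [cf_zero] at h1; omega
    rw [cf_rec hδ hw0, Nat.digits_def' (by omega : 1 < b)
      (by rw [← cf_rec hδ hw0]; exact h1)] at he
    have hmod : (w (n % δ) + b * cf b δ w (n / δ)) % b = w (n % δ) := by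
      rw [Nat.add_mul_mod_self_left, Nat.mod_eq_of_lt (hwb _)]
    have hdiv : (w (n % δ) + b * cf b δ w (n / δ)) / b = cf b δ w (n / δ) := by
      rw [Nat.add_mul_div_left _ _ (by omega : 0 < b), Nat.div_eq_of_lt (hwb _), Nat.zero_add]
    rw [hmod, hdiv] at he
    rcases List.mem_cons.mp he with rfl | he
    · exact hwD _ (Nat.mod_lt _ (by omega))
    · exact ih (n / δ) (Nat.div_lt_self hn (by omega)) e he

lemma cf_surj {D : Finset ℕ} (hδ : 2 ≤ δ) (hb : 2 ≤ b) (hw0 : w 0 = 0)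
    (hwb : ∀ r, w r < b) (hsurj : ∀ x ∈ D, ∃ r < δ, w r = x) :
    ∀ M, (∀ e ∈ Nat.digits b M, e ∈ D) → ∃ n, cf b δ w n = M := by
  intro M
  induction M using Nat.strong_induction_on with
  | _ M ih =>
    intro hM
    rcases Nat.eq_zero_or_pos M with rfl | hMpos
    · exact ⟨0, cf_zero⟩
    rw [Nat.digits_def' (by omega : 1 < b) hMpos] at hM
    obtain ⟨r, hr, hwr⟩ := hsurj _ (hM _ List.mem_cons_self)
    obtain ⟨q, hq⟩ := ih (M / b) (Nat.div_lt_self hMpos (by omega))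
      (fun e he => hM e (List.mem_cons_of_mem _ he))
    refine ⟨δ * q + r, ?_⟩
    rw [cf_rec hδ hw0]
    have : (δ * q + r) % δ = r := by
      rw [Nat.mul_add_mod, Nat.mod_eq_of_lt hr]
    rw [this]
    have : (δ * q + r) / δ = q := by
      rw [Nat.mul_add_div (by omega : 0 < δ), Nat.div_eq_of_lt hr, Nat.add_zero]
    rw [this, hq, hwr]
    exact Nat.mod_add_div M b

lemma cf_add_pow (hδ : 2 ≤ δ) (hw0 : w 0 = 0) :
    ∀ i n m, n < δ ^ i → cf b δ w (n + m * δ ^ i) = cf b δ w n + cf b δ w m * b ^ i := by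
  intro i
  induction i with
  | zero =>
    intro n m hn
    simp only [pow_zero, Nat.lt_one_iff] at hn
    subst hn
    simp [cf_zero]
  | succ i ih =>
    intro n m hn
    have e1 : (n + m * δ ^ (i + 1)) % δ = n % δ := by
      have : m * δ ^ (i + 1) = (m * δ ^ i) * δ := by ring
      rw [this, Nat.add_mul_mod_self_right]
    have e2 : (n + m * δ ^ (i + 1)) / δ = n / δ + m * δ ^ i := by
      have : m * δ ^ (i + 1) = (m * δ ^ i) * δ := by ring
      rw [this, Nat.add_mul_div_right _ _ (by omega : 0 < δ)]
    have hq : n / δ < δ ^ i := by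
      rw [Nat.div_lt_iff_lt_mul (by omega)]
      calc n < δ ^ (i + 1) := hn
        _ = δ ^ i * δ := pow_succ δ i
    rw [cf_rec hδ hw0 (n := n + m * δ ^ (i + 1)), e1, e2, ih _ _ hq,
      cf_rec hδ hw0 (n := n)]
    ring

lemma sum_digits_mod_div (hb : 2 ≤ b) (x : ℕ) :
    (Nat.digits b x).sum = x % b + (Nat.digits b (x / b)).sum := by
  rcases Nat.eq_zero_or_pos x with rfl | hx
  · simp
  · rw [Nat.digits_def' (by omega : 1 < b) hx]; simp

lemma sum_digits_add_mul_pow (hb : 2 ≤ b) :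
    ∀ i x y, x < b ^ i →
      (Nat.digits b (x + y * b ^ i)).sum = (Nat.digits b x).sum + (Nat.digits b y).sum := by
  intro i
  induction i with
  | zero =>
    intro x y hx
    simp only [pow_zero, Nat.lt_one_iff] at hx
    subst hx
    simp
  | succ i ih =>
    intro x y hx
    rcases Nat.eq_zero_or_pos (x + y * b ^ (i + 1)) with h0 | h0
    · have hx0 : x = 0 := by omega
      have hy0 : y = 0 := by
        have : 0 < b ^ (i + 1) := Nat.pow_pos (by omega)
        nlinarith
      simp [hx0, hy0]
    rw [sum_digits_mod_div hb (x + y * b ^ (i + 1))]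
    have e1 : (x + y * b ^ (i + 1)) % b = x % b := by
      have : y * b ^ (i + 1) = (y * b ^ i) * b := by ring
      rw [this, Nat.add_mul_mod_self_right]
    have e2 : (x + y * b ^ (i + 1)) / b = x / b + y * b ^ i := by
      have : y * b ^ (i + 1) = (y * b ^ i) * b := by ring
      rw [this, Nat.add_mul_div_right _ _ (by omega : 0 < b)]
    have hq : x / b < b ^ i := by
      rw [Nat.div_lt_iff_lt_mul (by omega)]
      calc x < b ^ (i + 1) := hx
        _ = b ^ i * b := pow_succ b i
    rw [e1, e2, ih _ _ hq, sum_digits_mod_div hb x]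
    ring

end CantorAux

/-- Let `k` be the increasing enumeration of the integer Cantor set `C_{b,D}`
(with `0 ∈ D`, `δ = |D|`), `s_b` the base-`b` digit sum, and fix `h ≥ 1` and `K, s ≥ 0`.
If `j` belongs to `Δ = {n : k_{n+h} − k_n = K and s_b(k_{n+h}) − s_b(k_n) = s}` and
`j + h < δ^i`, then `j + m·δ^i ∈ Δ` for every `m ≥ 0`. -/
theorem cantor_difference_set_progression
    (b : ℕ) (hb : 3 ≤ b) (D : Finset ℕ) (hD : 2 ≤ D.card) (hDb : D.card < b)
    (hDsub : ∀ d ∈ D, d < b) (h0 : 0 ∈ D)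
    (k : ℕ → ℕ) (hk : StrictMono k)
    (hkr : Set.range k = {m : ℕ | ∀ d ∈ Nat.digits b m, d ∈ D})
    (h K s : ℕ) (hh : 1 ≤ h)
    (j i : ℕ) (hji : j + h < D.card ^ i)
    (hjK : k (j + h) = k j + K)
    (hjs : ((Nat.digits b (k (j + h))).sum : ℤ) - (Nat.digits b (k j)).sum = s)
    (m : ℕ) :
    k (j + m * D.card ^ i + h) = k (j + m * D.card ^ i) + K ∧
    ((Nat.digits b (k (j + m * D.card ^ i + h))).sum : ℤ)
      - (Nat.digits b (k (j + m * D.card ^ i))).sum = s := by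
  classical
  set δ := D.card with hδdef
  have hδ2 : 2 ≤ δ := hD
  have hb2 : 2 ≤ b := by omega
  set e := D.orderEmbOfFin (rfl : D.card = δ) with he
  set w : ℕ → ℕ := fun r => if hr : r < δ then e ⟨r, hr⟩ else 0 with hw
  have hwD : ∀ r < δ, w r ∈ D := by
    intro r hr
    simp only [hw, dif_pos hr]
    exact Finset.orderEmbOfFin_mem D _ _
  have hw0 : w 0 = 0 := by
    have h00 : (0 : ℕ) < δ := by omega
    have : w 0 = D.min' ⟨0, h0⟩ := by
      simp only [hw, dif_pos h00]
      rw [Finset.orderEmbOfFin_zero (rfl : D.card = δ) h00]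
    rw [this]
    exact Nat.le_antisymm (Finset.min'_le _ _ h0) (Nat.zero_le _)
  have hwb : ∀ r, w r < b := by
    intro r
    by_cases hr : r < δ
    · exact hDsub _ (hwD r hr)
    · simp only [hw, dif_neg hr]; omega
  have hwm : ∀ r r', r < r' → r' < δ → w r < w r' := by
    intro r r' hrr hr'
    have hr : r < δ := hrr.trans hr'
    simp only [hw, dif_pos hr, dif_pos hr']
    exact e.strictMono (by exact_mod_cast hrr)
  have hsurj : ∀ x ∈ D, ∃ r < δ, w r = x := by
    intro x hx
    have : (x : ℕ) ∈ Set.range e := by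
      rw [Finset.range_orderEmbOfFin]; exact hx
    obtain ⟨⟨r, hr⟩, hrx⟩ := this
    exact ⟨r, hr, by simp only [hw]; exact (dif_pos hr).trans hrx⟩
  -- identify k with cf
  have hkcf : k = CantorAux.cf b δ w := by
    rw [← StrictMono.range_inj hk (CantorAux.cf_strictMono hδ2 hw0 hwb hwm), hkr]
    ext M
    simp only [Set.mem_setOf_eq, Set.mem_range]
    constructor
    · intro hM
      obtain ⟨n, hn⟩ := CantorAux.cf_surj hδ2 hb2 hw0 hwb hsurj M hM
      exact ⟨n, hn⟩
    · rintro ⟨n, rfl⟩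
      exact CantorAux.cf_digits_mem hδ2 hb2 hw0 hwb hwD n
  subst hkcf
  have hj : j < δ ^ i := by omega
  have e1 : CantorAux.cf b δ w (j + m * δ ^ i) =
      CantorAux.cf b δ w j + CantorAux.cf b δ w m * b ^ i :=
    CantorAux.cf_add_pow hδ2 hw0 i j m hj
  have e2 : CantorAux.cf b δ w (j + m * δ ^ i + h) =
      CantorAux.cf b δ w (j + h) + CantorAux.cf b δ w m * b ^ i := by
    have : j + m * δ ^ i + h = (j + h) + m * δ ^ i := by ring
    rw [this]
    exact CantorAux.cf_add_pow hδ2 hw0 i (j + h) m hji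
  have hlt1 : CantorAux.cf b δ w j < b ^ i := CantorAux.cf_lt_pow hδ2 hw0 hwb i j hj
  have hlt2 : CantorAux.cf b δ w (j + h) < b ^ i := CantorAux.cf_lt_pow hδ2 hw0 hwb i (j + h) hji
  have s1 : (Nat.digits b (CantorAux.cf b δ w (j + m * δ ^ i))).sum =
      (Nat.digits b (CantorAux.cf b δ w j)).sum
        + (Nat.digits b (CantorAux.cf b δ w m)).sum := by
    rw [e1]
    exact CantorAux.sum_digits_add_mul_pow hb2 i _ _ hlt1
  have s2 : (Nat.digits b (CantorAux.cf b δ w (j + m * δ ^ i + h))).sum =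
      (Nat.digits b (CantorAux.cf b δ w (j + h))).sum
        + (Nat.digits b (CantorAux.cf b δ w m)).sum := by
    rw [e2]
    exact CantorAux.sum_digits_add_mul_pow hb2 i _ _ hlt2
  constructor
  · rw [e1, e2, hjK]; ring
  · rw [s1, s2]
    omega
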